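/- Let the set function f : 2^V → ℝ≥0 be monotone, α-weakly DR-submodular for some α ∈ (0,1], with f(∅) = 0, and let w(z) = e^{α(z−1)}. If a point x = (p_1^a,…,p_K^a) ∈ ∏_{k=1}^K Δ_{n_k} is a stationary point of the auxiliary objective, i.e. ⟨ y − x, ∫_0^1 w(z)·∇F(z·x) dz ⟩ ≤ 0 for all y ∈ ∏_{k=1}^K Δ_{n_k}, then F(x) ≥ (1 − e^{−α})·f(S) for every feasible subset S ⊆ V. -/

import Mathlib

open Finset

noncomputable section

namespace Multinoulli

variable {K : ℕ}

/-- An element of the ground set `V`: a community index `k` together with the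
index `m` of the element `v_k^m` inside its community `V_k`. -/
abbrev Elem (n : Fin K → ℕ) := Σ k : Fin K, Fin (n k)

/-- A sampling slot: a community `k` together with a trial index `b ∈ {1,…,B_k}`. -/
abbrev Slot (B : Fin K → ℕ) := Σ k : Fin K, Fin (B k)

/-- A joint outcome of all the independent multinoulli trials; `none` encodes a
draw of `∅`, which contributes no element. -/
abbrev Choice (n B : Fin K → ℕ) := ∀ s : Slot B, Option (Fin (n s.1))

/-- The probability that `Multi(p_k)` (the `k`-th block of `x`) assigns to a given
outcome: `x ⟨k,m⟩` for the element `v_k^m` and `1 - Σ_m x ⟨k,m⟩` for `∅`. -/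
def prob (n : Fin K → ℕ) (x : Elem n → ℝ) (k : Fin K) : Option (Fin (n k)) → ℝ
  | some m => x ⟨k, m⟩
  | none => 1 - ∑ m : Fin (n k), x ⟨k, m⟩

/-- The probability of the joint outcome `e` (all trials are mutually independent). -/
def jointProb (n B : Fin K → ℕ) (x : Elem n → ℝ) (e : Choice n B) : ℝ :=
  ∏ s : Slot B, prob n x s.1 (e s)

/-- The subset of the ground set selected by the trials whose slot lies in `A`
(a draw of `∅` contributes no element to the union). -/
def chosen (n B : Fin K → ℕ) (e : Choice n B) (A : Finset (Slot B)) : Finset (Elem n) :=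
  A.biUnion fun s => ((e s).map fun m => (⟨s.1, m⟩ : Elem n)).toFinset

/-- The Multinoulli Extension `F` of the set function `f`:
`F(x) = E[f(∪_{k,b} {e_k^b})]` for mutually independent `e_k^b ∼ Multi(p_k)`. -/
def ME (n B : Fin K → ℕ) (f : Finset (Elem n) → ℝ) (x : Elem n → ℝ) : ℝ :=
  ∑ e : Choice n B, f (chosen n B e Finset.univ) * jointProb n B x e

/-- The first-order partial derivative `∂G/∂x_i` at `x`. -/
def pderiv (n : Fin K → ℕ) (G : (Elem n → ℝ) → ℝ) (i : Elem n) (x : Elem n → ℝ) : ℝ :=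
  deriv (fun t => G (Function.update x i t)) (x i)

/-- The gradient `∇G(x)`. -/
def grad (n : Fin K → ℕ) (G : (Elem n → ℝ) → ℝ) (x : Elem n → ℝ) : Elem n → ℝ :=
  fun i => pderiv n G i x

/-- The second-order partial derivative `∂²G/∂x_i∂x_j` at `x`. -/
def pderiv2 (n : Fin K → ℕ) (G : (Elem n → ℝ) → ℝ) (i j : Elem n) (x : Elem n → ℝ) : ℝ :=
  pderiv n (fun y => pderiv n G j y) i x

/-- The Euclidean inner product on `∏_k ℝ^{n_k}`. -/
def inner' (n : Fin K → ℕ) (u v : Elem n → ℝ) : ℝ := ∑ i : Elem n, u i * v i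

/-- Membership in the product of simplices `∏_{k=1}^K Δ_{n_k}`. -/
def InSimplex (n : Fin K → ℕ) (x : Elem n → ℝ) : Prop :=
  (∀ i, 0 ≤ x i) ∧ ∀ k : Fin K, ∑ m : Fin (n k), x ⟨k, m⟩ ≤ 1

/-- Feasibility for the partition constraint: `|S ∩ V_k| ≤ B_k` for all `k`. -/
def Feasible (n B : Fin K → ℕ) (S : Finset (Elem n)) : Prop :=
  ∀ k : Fin K, (S.filter fun i => i.1 = k).card ≤ B k

/-- Monotonicity of a set function. -/
def MonotoneSet (n : Fin K → ℕ) (f : Finset (Elem n) → ℝ) : Prop :=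
  ∀ A B : Finset (Elem n), A ⊆ B → f A ≤ f B

/-- The marginal contribution `f(v|A) = f(A ∪ {v}) - f(A)`. -/
def marg (n : Fin K → ℕ) (f : Finset (Elem n) → ℝ) (v : Elem n) (A : Finset (Elem n)) : ℝ :=
  f (insert v A) - f A

/-- `α`-weak DR-submodularity: `f(v|A) ≥ α·f(v|B)` for all `A ⊆ B` and `v ∉ B`. -/
def WeaklyDR (n : Fin K → ℕ) (f : Finset (Elem n) → ℝ) (α : ℝ) : Prop :=
  ∀ A B : Finset (Elem n), A ⊆ B → ∀ v, v ∉ B → α * marg n f v B ≤ marg n f v A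

/-- `γ`-weak submodularity from below. -/
def WeaklyBelow (n : Fin K → ℕ) (f : Finset (Elem n) → ℝ) (γ : ℝ) : Prop :=
  ∀ A B : Finset (Elem n), A ⊆ B → γ * (f B - f A) ≤ ∑ v ∈ B \ A, marg n f v A

/-- `β`-weak submodularity from above. -/
def WeaklyAbove (n : Fin K → ℕ) (f : Finset (Elem n) → ℝ) (β : ℝ) : Prop :=
  ∀ A B : Finset (Elem n), A ⊆ B → ∑ v ∈ B \ A, marg n f v (B.erase v) ≤ β * (f B - f A)

/-- The scaled indicator vector `Σ_{k=1}^K (1/B_k)·1_{S∩V_k}`. -/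
def indVec (n B : Fin K → ℕ) (S : Finset (Elem n)) : Elem n → ℝ :=
  fun i => if i ∈ S then ((B i.1 : ℝ))⁻¹ else 0


/-- The (coordinatewise) auxiliary integral `∫_0^1 w(z)·∇F(z·x) dz`, where `z·x`
denotes coordinatewise scaling of `x` by `z`. -/
def auxGrad (n B : Fin K → ℕ) (f : Finset (Elem n) → ℝ) (w : ℝ → ℝ) (x : Elem n → ℝ) :
    Elem n → ℝ :=
  fun i => ∫ z in (0:ℝ)..1, w z * grad n (ME n B f) (fun j => z * x j) i

section Aux
variable {K : ℕ} (n B : Fin K → ℕ)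

lemma sum_prob (x : Elem n → ℝ) (k : Fin K) :
    ∑ v : Option (Fin (n k)), prob n x k v = 1 := by
  rw [Fintype.sum_option]
  simp [prob]

lemma prob_nonneg {x : Elem n → ℝ} (hx : InSimplex n x) (k : Fin K) (v : Option (Fin (n k))) :
    0 ≤ prob n x k v := by
  cases v with
  | none => simpa [prob] using hx.2 k
  | some m => exact hx.1 _

lemma jointProb_nonneg {x : Elem n → ℝ} (hx : InSimplex n x) (e : Choice n B) :
    0 ≤ jointProb n B x e :=
  Finset.prod_nonneg fun s _ => prob_nonneg n hx s.1 (e s)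

lemma sum_jointProb (x : Elem n → ℝ) : ∑ e : Choice n B, jointProb n B x e = 1 := by
  have : ∑ e : Choice n B, jointProb n B x e
      = ∏ s : Slot B, ∑ v : Option (Fin (n s.1)), prob n x s.1 v :=
    (Fintype.prod_sum _).symm
  rw [this]
  exact Finset.prod_eq_one fun s _ => sum_prob n x s.1

lemma scaled_inSimplex {x : Elem n → ℝ} (hx : InSimplex n x) {z : ℝ} (h0 : 0 ≤ z) (h1 : z ≤ 1) :
    InSimplex n (fun j => z * x j) := by
  constructor
  · exact fun i => mul_nonneg h0 (hx.1 i)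
  · intro k
    have h : ∑ m : Fin (n k), z * x ⟨k, m⟩ = z * ∑ m : Fin (n k), x ⟨k, m⟩ := by
      rw [Finset.mul_sum]
    rw [h]
    have hnn : 0 ≤ ∑ m : Fin (n k), x ⟨k, m⟩ := Finset.sum_nonneg fun m _ => hx.1 _
    calc z * ∑ m : Fin (n k), x ⟨k, m⟩ ≤ 1 * ∑ m : Fin (n k), x ⟨k, m⟩ := by
          exact mul_le_mul_of_nonneg_right h1 hnn
      _ ≤ 1 := by rw [one_mul]; exact hx.2 k

end Aux
section Aux2
variable {K : ℕ} (n B : Fin K → ℕ)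

/-- Outcomes of all slots except `s`. -/
abbrev Rest (s : Slot B) := ∀ j : {j : Slot B // j ≠ s}, Option (Fin (n j.1.1))

/-- Glue an outcome at slot `s` with outcomes at the remaining slots. -/
def glue (s : Slot B) (v : Option (Fin (n s.1))) (r : Rest n B s) : Choice n B :=
  (Equiv.piSplitAt s fun j : Slot B => Option (Fin (n j.1))).symm (v, r)

lemma glue_self (s : Slot B) (v : Option (Fin (n s.1))) (r : Rest n B s) :
    glue n B s v r s = v := by
  simp [glue]

lemma glue_ne {s j : Slot B} (h : j ≠ s) (v : Option (Fin (n s.1))) (r : Rest n B s) :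
    glue n B s v r j = r ⟨j, h⟩ := by
  simp [glue, h]

lemma sum_glue (s : Slot B) (g : Choice n B → ℝ) :
    ∑ e : Choice n B, g e
      = ∑ v : Option (Fin (n s.1)), ∑ r : Rest n B s, g (glue n B s v r) := by
  rw [← Equiv.sum_comp (Equiv.piSplitAt s fun j : Slot B => Option (Fin (n j.1))).symm g]
  rw [Fintype.sum_prod_type]
  rfl

/-- Probability of a rest-outcome. -/
def q (s : Slot B) (x : Elem n → ℝ) (r : Rest n B s) : ℝ :=
  ∏ j : {j : Slot B // j ≠ s}, prob n x j.1.1 (r j)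

lemma q_nonneg {x : Elem n → ℝ} (hx : InSimplex n x) (s : Slot B) (r : Rest n B s) :
    0 ≤ q n B s x r :=
  Finset.prod_nonneg fun j _ => prob_nonneg n hx _ _

lemma sum_q (s : Slot B) (x : Elem n → ℝ) : ∑ r : Rest n B s, q n B s x r = 1 := by
  have : ∑ r : Rest n B s, q n B s x r
      = ∏ j : {j : Slot B // j ≠ s}, ∑ v : Option (Fin (n j.1.1)), prob n x j.1.1 v :=
    (Fintype.prod_sum _).symm
  rw [this]
  exact Finset.prod_eq_one fun j _ => sum_prob n x j.1.1

lemma prod_erase_glue (s : Slot B) (x : Elem n → ℝ) (v : Option (Fin (n s.1))) (r : Rest n B s) :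
    ∏ s' ∈ univ.erase s, prob n x s'.1 (glue n B s v r s') = q n B s x r := by
  rw [q, Finset.prod_subtype (p := fun j => j ≠ s) (univ.erase s) (fun j => by simp)
    (fun s' => prob n x s'.1 (glue n B s v r s'))]
  exact Fintype.prod_congr _ _ fun j => by rw [glue_ne n B j.2]

lemma jointProb_glue (s : Slot B) (x : Elem n → ℝ) (v : Option (Fin (n s.1))) (r : Rest n B s) :
    jointProb n B x (glue n B s v r) = prob n x s.1 v * q n B s x r := by
  rw [jointProb, ← Finset.mul_prod_erase univ _ (Finset.mem_univ s), glue_self,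
    prod_erase_glue]

lemma chosen_congr {e e' : Choice n B} {A : Finset (Slot B)} (h : ∀ s ∈ A, e s = e' s) :
    chosen n B e A = chosen n B e' A :=
  Finset.biUnion_congr rfl fun s hs => by rw [h s hs]

/-- The set chosen by the slots other than `s`. -/
def Rset (s : Slot B) (r : Rest n B s) : Finset (Elem n) :=
  chosen n B (glue n B s none r) (univ.erase s)

lemma chosen_glue (s : Slot B) (v : Option (Fin (n s.1))) (r : Rest n B s) :
    chosen n B (glue n B s v r) univ
      = ((v.map fun m => (⟨s.1, m⟩ : Elem n)).toFinset) ∪ Rset n B s r := by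
  have h : (univ : Finset (Slot B)) = insert s (univ.erase s) :=
    (Finset.insert_erase (Finset.mem_univ s)).symm
  rw [chosen, h, Finset.biUnion_insert, glue_self]
  congr 1
  exact chosen_congr n B fun s' hs' => by
    rw [glue_ne n B (Finset.mem_erase.1 hs').1, glue_ne n B (Finset.mem_erase.1 hs').1]

lemma chosen_glue_none (s : Slot B) (r : Rest n B s) :
    chosen n B (glue n B s none r) univ = Rset n B s r := by
  rw [chosen_glue]; simp

lemma chosen_glue_some (s : Slot B) (m : Fin (n s.1)) (r : Rest n B s) :
    chosen n B (glue n B s (some m) r) univ = insert (⟨s.1, m⟩ : Elem n) (Rset n B s r) := by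
  rw [chosen_glue]; simp

lemma Rset_subset (s : Slot B) (v : Option (Fin (n s.1))) (r : Rest n B s) :
    Rset n B s r ⊆ chosen n B (glue n B s v r) univ := by
  rw [chosen_glue]; exact Finset.subset_union_right

end Aux2
section Aux3
variable {K : ℕ} (n B : Fin K → ℕ)

/-- Derivative of `prob` in coordinate `i`. -/
def dcoef (i : Elem n) (k : Fin K) : Option (Fin (n k)) → ℝ
  | some m => if (⟨k, m⟩ : Elem n) = i then 1 else 0
  | none => if k = i.1 then -1 else 0

/-- Derivative of `prob (z • x)` in `z`. -/
def ccoef (x : Elem n → ℝ) (k : Fin K) : Option (Fin (n k)) → ℝ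
  | some m => x ⟨k, m⟩
  | none => -∑ m : Fin (n k), x ⟨k, m⟩

lemma sum_indicator (i : Elem n) (k : Fin K) :
    ∑ m : Fin (n k), (if (⟨k, m⟩ : Elem n) = i then (1:ℝ) else 0)
      = if k = i.1 then 1 else 0 := by
  obtain ⟨ik, im⟩ := i
  by_cases h : k = ik
  · subst h
    simp [Sigma.mk.inj_iff]
  · simp [Sigma.mk.inj_iff, h]

lemma hasDerivAt_prob_update (x : Elem n → ℝ) (i : Elem n) (k : Fin K)
    (v : Option (Fin (n k))) (t : ℝ) :
    HasDerivAt (fun t => prob n (Function.update x i t) k v) (dcoef n i k v) t := by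
  cases v with
  | some m =>
    simp only [prob, dcoef, Function.update_apply]
    by_cases h : (⟨k, m⟩ : Elem n) = i
    · simp only [h, if_true]
      exact hasDerivAt_id t
    · simp only [h, if_false]
      exact hasDerivAt_const t _
  | none =>
    simp only [prob, dcoef]
    have h1 : ∀ m : Fin (n k), HasDerivAt (fun t => Function.update x i t ⟨k, m⟩)
        (if (⟨k, m⟩ : Elem n) = i then (1:ℝ) else 0) t := by
      intro m
      simp only [Function.update_apply]
      by_cases h : (⟨k, m⟩ : Elem n) = i
      · simp only [h, if_true]; exact hasDerivAt_id t
      · simp only [h, if_false]; exact hasDerivAt_const t _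
    have h2 := HasDerivAt.fun_sum (u := univ) fun m _ => h1 m
    have h3 := (hasDerivAt_const t (1:ℝ)).fun_sub h2
    rw [sum_indicator] at h3
    refine h3.congr_deriv ?_
    by_cases h : k = i.1 <;> simp [h]

/-- Explicit formula for the partial derivative of `ME`. -/
def D (f : Finset (Elem n) → ℝ) (i : Elem n) (x : Elem n → ℝ) : ℝ :=
  ∑ e : Choice n B, f (chosen n B e univ) *
    ∑ s : Slot B, (∏ s' ∈ univ.erase s, prob n x s'.1 (e s')) * dcoef n i s.1 (e s)

lemma hasDerivAt_ME_update (f : Finset (Elem n) → ℝ) (x : Elem n → ℝ) (i : Elem n) :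
    HasDerivAt (fun t => ME n B f (Function.update x i t)) (D n B f i x) (x i) := by
  have he : ∀ e : Choice n B, HasDerivAt (fun t => jointProb n B (Function.update x i t) e)
      (∑ s : Slot B, (∏ s' ∈ univ.erase s, prob n x s'.1 (e s')) * dcoef n i s.1 (e s))
      (x i) := by
    intro e
    have h := HasDerivAt.fun_finsetProd (u := (univ : Finset (Slot B)))
      (f := fun s t => prob n (Function.update x i t) s.1 (e s))
      (f' := fun s => dcoef n i s.1 (e s)) (x := x i)
      (fun s _ => hasDerivAt_prob_update n x i s.1 (e s) (x i))
    simp only [Function.update_eq_self, smul_eq_mul] at h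
    exact h
  have h := HasDerivAt.fun_sum (u := (univ : Finset (Choice n B)))
    fun e _ => (he e).const_mul (f (chosen n B e univ))
  exact h

lemma pderiv_ME (f : Finset (Elem n) → ℝ) (x : Elem n → ℝ) (i : Elem n) :
    pderiv n (ME n B f) i x = D n B f i x :=
  (hasDerivAt_ME_update n B f x i).deriv

end Aux3
section Aux4
variable {K : ℕ} (n B : Fin K → ℕ)

lemma continuous_prob_scale (x : Elem n → ℝ) (k : Fin K) (v : Option (Fin (n k))) :
    Continuous fun z : ℝ => prob n (fun j => z * x j) k v := by
  cases v with
  | some m => simp only [prob]; fun_prop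
  | none =>
    simp only [prob]
    have h : (fun z : ℝ => 1 - ∑ m : Fin (n k), z * x ⟨k, m⟩)
        = fun z : ℝ => 1 - z * ∑ m : Fin (n k), x ⟨k, m⟩ := by
      funext z; rw [Finset.mul_sum]
    rw [h]; fun_prop

lemma hasDerivAt_prob_scale (x : Elem n → ℝ) (k : Fin K) (v : Option (Fin (n k))) (z : ℝ) :
    HasDerivAt (fun z : ℝ => prob n (fun j => z * x j) k v) (ccoef n x k v) z := by
  cases v with
  | some m =>
    simp only [prob, ccoef]
    simpa using (hasDerivAt_id z).mul_const (x ⟨k, m⟩)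
  | none =>
    simp only [prob, ccoef]
    have h : (fun z : ℝ => 1 - ∑ m : Fin (n k), z * x ⟨k, m⟩)
        = fun z : ℝ => 1 - z * ∑ m : Fin (n k), x ⟨k, m⟩ := by
      funext z; rw [Finset.mul_sum]
    rw [h]
    simpa using (hasDerivAt_const z (1:ℝ)).fun_sub ((hasDerivAt_id z).mul_const _)

/-- The derivative of `z ↦ ME(z·x)`. -/
def Dc (f : Finset (Elem n) → ℝ) (x : Elem n → ℝ) (x' : Elem n → ℝ) : ℝ :=
  ∑ e : Choice n B, f (chosen n B e univ) *
    ∑ s : Slot B, (∏ s' ∈ univ.erase s, prob n x' s'.1 (e s')) * ccoef n x s.1 (e s)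

lemma hasDerivAt_ME_scale (f : Finset (Elem n) → ℝ) (x : Elem n → ℝ) (z : ℝ) :
    HasDerivAt (fun z : ℝ => ME n B f (fun j => z * x j))
      (Dc n B f x (fun j => z * x j)) z := by
  have he : ∀ e : Choice n B,
      HasDerivAt (fun z : ℝ => jointProb n B (fun j => z * x j) e)
      (∑ s : Slot B, (∏ s' ∈ univ.erase s, prob n (fun j => z * x j) s'.1 (e s'))
        * ccoef n x s.1 (e s)) z := by
    intro e
    have h := HasDerivAt.fun_finsetProd (u := (univ : Finset (Slot B)))
      (f := fun s z => prob n (fun j => z * x j) s.1 (e s))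
      (f' := fun s => ccoef n x s.1 (e s)) (x := z)
      (fun s _ => hasDerivAt_prob_scale n x s.1 (e s) z)
    simp only [smul_eq_mul] at h
    exact h
  exact HasDerivAt.fun_sum (u := (univ : Finset (Choice n B)))
    fun e _ => (he e).const_mul (f (chosen n B e univ))

lemma sum_mul_dcoef (x : Elem n → ℝ) (k : Fin K) (v : Option (Fin (n k))) :
    ∑ i : Elem n, x i * dcoef n i k v = ccoef n x k v := by
  cases v with
  | some m =>
    simp only [dcoef, ccoef, mul_ite, mul_one, mul_zero]
    rw [Finset.sum_ite_eq univ (⟨k, m⟩ : Elem n) x]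
    simp
  | none =>
    simp only [dcoef, ccoef, mul_ite, mul_neg, mul_one, mul_zero]
    rw [show (univ : Finset (Elem n)) = (univ : Finset (Fin K)).sigma (fun _ => univ) from
      Finset.univ_sigma_univ.symm, Finset.sum_sigma]
    have h : ∀ k' : Fin K, (∑ m : Fin (n k'), if k = k' then -x ⟨k', m⟩ else 0)
        = if k = k' then -∑ m : Fin (n k'), x ⟨k', m⟩ else 0 := by
      intro k'; split <;> simp
    simp only [h]
    rw [Finset.sum_ite_eq univ k (fun k' => -∑ m : Fin (n k'), x ⟨k', m⟩)]
    simp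

lemma Dc_eq_sum (f : Finset (Elem n) → ℝ) (x x' : Elem n → ℝ) :
    Dc n B f x x' = ∑ i : Elem n, x i * D n B f i x' := by
  have h1 : ∀ (g : Choice n B → Slot B → Elem n → ℝ),
      ∑ e : Choice n B, ∑ s : Slot B, ∑ i : Elem n, g e s i
        = ∑ i : Elem n, ∑ e : Choice n B, ∑ s : Slot B, g e s i := by
    intro g
    calc ∑ e : Choice n B, ∑ s : Slot B, ∑ i : Elem n, g e s i
        = ∑ e : Choice n B, ∑ i : Elem n, ∑ s : Slot B, g e s i :=
          Finset.sum_congr rfl fun e _ => Finset.sum_comm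
      _ = ∑ i : Elem n, ∑ e : Choice n B, ∑ s : Slot B, g e s i := Finset.sum_comm
  unfold Dc D
  simp only [← sum_mul_dcoef n x, Finset.mul_sum]
  rw [h1]
  exact Finset.sum_congr rfl fun i _ => Finset.sum_congr rfl fun e _ =>
    Finset.sum_congr rfl fun s _ => by ring

end Aux4
section Aux5
variable {K : ℕ} (n B : Fin K → ℕ)

lemma continuous_D (f : Finset (Elem n) → ℝ) (x : Elem n → ℝ) (i : Elem n) :
    Continuous fun z : ℝ => D n B f i (fun j => z * x j) := by
  unfold D
  refine continuous_finset_sum _ fun e _ => Continuous.mul continuous_const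
    (continuous_finset_sum _ fun s _ => Continuous.mul
      (continuous_finset_prod _ fun s' _ => continuous_prob_scale n x s'.1 (e s'))
      continuous_const)

lemma continuous_Dc (f : Finset (Elem n) → ℝ) (x : Elem n → ℝ) :
    Continuous fun z : ℝ => Dc n B f x (fun j => z * x j) := by
  unfold Dc
  refine continuous_finset_sum _ fun e _ => Continuous.mul continuous_const
    (continuous_finset_sum _ fun s _ => Continuous.mul
      (continuous_finset_prod _ fun s' _ => continuous_prob_scale n x s'.1 (e s'))
      continuous_const)

lemma ME_zero (f : Finset (Elem n) → ℝ) (hfempty : f ∅ = 0) :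
    ME n B f (fun _ => 0) = 0 := by
  rw [ME]
  apply Finset.sum_eq_zero
  intro e _
  by_cases h : ∀ s : Slot B, e s = none
  · have hc : chosen n B e univ = ∅ := by
      ext a; simp [chosen, h]
    rw [hc, hfempty, zero_mul]
  · push_neg at h
    obtain ⟨s, hs⟩ := h
    obtain ⟨m, hm⟩ := Option.ne_none_iff_exists'.1 hs
    have hj : jointProb n B (fun _ => 0) e = 0 := by
      rw [jointProb]
      apply Finset.prod_eq_zero (Finset.mem_univ s)
      rw [hm]; simp [prob]
    rw [hj, mul_zero]

variable (f : Finset (Elem n) → ℝ)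

lemma marg_nonneg (hmono : MonotoneSet n f) (v : Elem n) (A : Finset (Elem n)) :
    0 ≤ marg n f v A :=
  sub_nonneg.2 (hmono A (insert v A) (Finset.subset_insert v A))

lemma marg_le {α : ℝ} (hmono : MonotoneSet n f) (hDR : WeaklyDR n f α)
    {A C : Finset (Elem n)} (h : A ⊆ C) (v : Elem n) :
    α * marg n f v C ≤ marg n f v A := by
  by_cases hv : v ∈ C
  · rw [marg, Finset.insert_eq_self.2 hv, sub_self, mul_zero]
    exact marg_nonneg n f hmono v A
  · exact hDR A C h v hv

lemma tele (φ : Elem n → ℕ) (hφ : Function.Injective φ) (S : Finset (Elem n)) :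
    ∀ A : Finset (Elem n),
      ∑ i ∈ S, marg n f i (A ∪ S.filter fun j => φ j < φ i) = f (A ∪ S) - f A := by
  induction S using Finset.strongInduction with
  | _ S ih =>
    intro A
    rcases S.eq_empty_or_nonempty with h | h
    · subst h; simp
    · obtain ⟨i0, hi0, hmax⟩ := Finset.exists_max_image S φ h
      rw [← Finset.add_sum_erase _ _ hi0]
      have hfilter0 : S.filter (fun j => φ j < φ i0) = S.erase i0 := by
        ext j
        simp only [Finset.mem_filter, Finset.mem_erase]
        constructor
        · rintro ⟨hjS, hlt⟩
          exact ⟨fun hj => absurd (hj ▸ hlt) (lt_irrefl _), hjS⟩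
        · rintro ⟨hne, hjS⟩
          exact ⟨hjS, lt_of_le_of_ne (hmax j hjS) fun hh => hne (hφ hh)⟩
      have hfilter : ∀ j ∈ S.erase i0,
          S.filter (fun j' => φ j' < φ j) = (S.erase i0).filter (fun j' => φ j' < φ j) := by
        intro j hj
        ext j'
        simp only [Finset.mem_filter, Finset.mem_erase]
        constructor
        · rintro ⟨hj'S, hlt⟩
          refine ⟨⟨fun hj' => ?_, hj'S⟩, hlt⟩
          subst hj'
          exact absurd (lt_of_lt_of_le hlt (hmax j (Finset.mem_of_mem_erase hj))) (lt_irrefl _)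
        · rintro ⟨⟨_, hj'S⟩, hlt⟩
          exact ⟨hj'S, hlt⟩
      rw [hfilter0,
        Finset.sum_congr rfl (fun j hj => by rw [hfilter j hj]),
        ih (S.erase i0) (Finset.erase_ssubset hi0) A]
      have hins : insert i0 (A ∪ S.erase i0) = A ∪ S := by
        rw [← Finset.union_insert, Finset.insert_erase hi0]
      rw [marg, hins]
      ring

lemma dcoef_ne {i : Elem n} {k : Fin K} (h : k ≠ i.1) (v : Option (Fin (n k))) :
    dcoef n i k v = 0 := by
  cases v with
  | some m =>
    simp only [dcoef, ite_eq_right_iff]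
    intro hh
    exact absurd (congrArg Sigma.fst hh) h
  | none => simp [dcoef, h]

lemma D_glue (f : Finset (Elem n) → ℝ) (x : Elem n → ℝ) (i : Elem n) :
    D n B f i x = ∑ b : Fin (B i.1), ∑ r : Rest n B ⟨i.1, b⟩,
      q n B ⟨i.1, b⟩ x r *
        (f (insert i (Rset n B ⟨i.1, b⟩ r)) - f (Rset n B ⟨i.1, b⟩ r)) := by
  obtain ⟨k0, m0⟩ := i
  unfold D
  simp only [Finset.mul_sum]
  rw [Finset.sum_comm]
  rw [show (univ : Finset (Slot B)) = (univ : Finset (Fin K)).sigma (fun _ => univ) from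
    Finset.univ_sigma_univ.symm, Finset.sum_sigma]
  rw [Finset.univ_sigma_univ]
  rw [Finset.sum_eq_single k0 (fun k _ hk => Finset.sum_eq_zero fun b _ =>
      Finset.sum_eq_zero fun e _ => by
        rw [dcoef_ne n (by exact hk), mul_zero, mul_zero])
    (fun hk => absurd (Finset.mem_univ _) hk)]
  refine Finset.sum_congr rfl fun b _ => ?_
  rw [sum_glue n B ⟨k0, b⟩ _]
  rw [Fintype.sum_option]
  have hnone : ∀ r : Rest n B ⟨k0, b⟩,
      f (chosen n B (glue n B ⟨k0, b⟩ none r) univ) *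
        ((∏ s' ∈ univ.erase ⟨k0, b⟩, prob n x s'.1 (glue n B ⟨k0, b⟩ none r s')) *
          dcoef n ⟨k0, m0⟩ k0 (glue n B ⟨k0, b⟩ none r ⟨k0, b⟩))
      = -(f (Rset n B ⟨k0, b⟩ r) * q n B ⟨k0, b⟩ x r) := by
    intro r
    rw [glue_self, prod_erase_glue, chosen_glue_none]
    simp [dcoef]
  have hsome : ∀ m : Fin (n k0), ∀ r : Rest n B ⟨k0, b⟩,
      f (chosen n B (glue n B ⟨k0, b⟩ (some m) r) univ) *
        ((∏ s' ∈ univ.erase ⟨k0, b⟩, prob n x s'.1 (glue n B ⟨k0, b⟩ (some m) r s')) *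
          dcoef n ⟨k0, m0⟩ k0 (glue n B ⟨k0, b⟩ (some m) r ⟨k0, b⟩))
      = if m = m0 then
          f (insert ⟨k0, m⟩ (Rset n B ⟨k0, b⟩ r)) * q n B ⟨k0, b⟩ x r else 0 := by
    intro m r
    rw [glue_self, prod_erase_glue, chosen_glue_some]
    simp only [dcoef, Sigma.mk.inj_iff, heq_eq_eq, true_and, mul_ite, mul_one, mul_zero]
  simp only [hnone, hsome]
  have hpull : ∀ m : Fin (n k0),
      (∑ r : Rest n B ⟨k0, b⟩, if m = m0 then
          f (insert (⟨k0, m⟩ : Elem n) (Rset n B ⟨k0, b⟩ r)) * q n B ⟨k0, b⟩ x r else 0)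
      = if m = m0 then
          ∑ r : Rest n B ⟨k0, b⟩,
            f (insert (⟨k0, m⟩ : Elem n) (Rset n B ⟨k0, b⟩ r)) * q n B ⟨k0, b⟩ x r else 0 := by
    intro m; split <;> simp
  simp only [hpull]
  rw [Finset.sum_ite_eq' univ m0]
  simp only [Finset.mem_univ, if_true]
  rw [← Finset.sum_add_distrib]
  exact Finset.sum_congr rfl fun r _ => by ring

end Aux5
section Aux6
variable {K : ℕ} (n B : Fin K → ℕ)

lemma indVec_inSimplex (S : Finset (Elem n)) (hS : Feasible n B S) (hB : ∀ k, 0 < B k) :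
    InSimplex n (indVec n B S) := by
  constructor
  · intro i
    unfold indVec
    split
    · positivity
    · exact le_refl 0
  · intro k
    have hBk : (0:ℝ) < (B k : ℝ) := by exact_mod_cast hB k
    have hcard : (univ.filter fun m : Fin (n k) => (⟨k, m⟩ : Elem n) ∈ S).card ≤ B k := by
      refine le_trans (Finset.card_le_card_of_injOn (fun m => (⟨k, m⟩ : Elem n)) ?_ ?_) (hS k)
      · intro m hm
        simp only [Finset.mem_coe, Finset.mem_filter, Finset.mem_univ, true_and] at hm ⊢
        simp [hm]
      · intro a _ b _ hab
        exact eq_of_heq (Sigma.mk.inj_iff.1 hab).2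
    have h1 : ∑ m : Fin (n k), indVec n B S ⟨k, m⟩
        = ((univ.filter fun m : Fin (n k) => (⟨k, m⟩ : Elem n) ∈ S).card : ℝ) * (B k : ℝ)⁻¹ := by
      simp only [indVec]
      rw [← Finset.sum_filter, Finset.sum_const, nsmul_eq_mul]
    rw [h1]
    calc ((univ.filter fun m : Fin (n k) => (⟨k, m⟩ : Elem n) ∈ S).card : ℝ) * (B k : ℝ)⁻¹
        ≤ (B k : ℝ) * (B k : ℝ)⁻¹ := by
          apply mul_le_mul_of_nonneg_right _ (by positivity)
          exact_mod_cast hcard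
      _ = 1 := mul_inv_cancel₀ (ne_of_gt hBk)

lemma slot_bound (f : Finset (Elem n) → ℝ) (hmono : MonotoneSet n f) {α : ℝ}
    (hDR : WeaklyDR n f α) {x' : Elem n → ℝ} (hx' : InSimplex n x')
    (i : Elem n) (b : Fin (B i.1)) (W : Finset (Elem n)) :
    α * ∑ e : Choice n B, jointProb n B x' e * marg n f i (chosen n B e univ ∪ W)
      ≤ ∑ r : Rest n B ⟨i.1, b⟩, q n B ⟨i.1, b⟩ x' r *
          (f (insert i (Rset n B ⟨i.1, b⟩ r)) - f (Rset n B ⟨i.1, b⟩ r)) := by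
  have hRHS : ∑ r : Rest n B ⟨i.1, b⟩, q n B ⟨i.1, b⟩ x' r *
          (f (insert i (Rset n B ⟨i.1, b⟩ r)) - f (Rset n B ⟨i.1, b⟩ r))
      = ∑ v : Option (Fin (n i.1)), ∑ r : Rest n B ⟨i.1, b⟩,
          prob n x' i.1 v * (q n B ⟨i.1, b⟩ x' r * marg n f i (Rset n B ⟨i.1, b⟩ r)) := by
    have : ∀ v : Option (Fin (n i.1)), ∑ r : Rest n B ⟨i.1, b⟩,
        prob n x' i.1 v * (q n B ⟨i.1, b⟩ x' r * marg n f i (Rset n B ⟨i.1, b⟩ r))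
        = prob n x' i.1 v * ∑ r : Rest n B ⟨i.1, b⟩,
            q n B ⟨i.1, b⟩ x' r * marg n f i (Rset n B ⟨i.1, b⟩ r) := by
      intro v; rw [Finset.mul_sum]
    simp only [this]
    rw [← Finset.sum_mul, sum_prob, one_mul]
    rfl
  rw [hRHS, Finset.mul_sum,
    sum_glue n B ⟨i.1, b⟩ (fun e => α *
      (jointProb n B x' e * marg n f i (chosen n B e univ ∪ W)))]
  refine Finset.sum_le_sum fun v _ => Finset.sum_le_sum fun r _ => ?_
  rw [jointProb_glue]
  have hsub : Rset n B ⟨i.1, b⟩ r ⊆ chosen n B (glue n B ⟨i.1, b⟩ v r) univ ∪ W :=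
    (Rset_subset n B ⟨i.1, b⟩ v r).trans Finset.subset_union_left
  have hm := marg_le n f hmono hDR hsub i
  have hnn : 0 ≤ prob n x' i.1 v * q n B ⟨i.1, b⟩ x' r :=
    mul_nonneg (prob_nonneg n hx' _ _) (q_nonneg n B hx' _ _)
  calc α * (prob n x' i.1 v * q n B ⟨i.1, b⟩ x' r *
        marg n f i (chosen n B (glue n B ⟨i.1, b⟩ v r) univ ∪ W))
      = (prob n x' i.1 v * q n B ⟨i.1, b⟩ x' r) *
        (α * marg n f i (chosen n B (glue n B ⟨i.1, b⟩ v r) univ ∪ W)) := by ring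
    _ ≤ (prob n x' i.1 v * q n B ⟨i.1, b⟩ x' r) * marg n f i (Rset n B ⟨i.1, b⟩ r) :=
        mul_le_mul_of_nonneg_left hm hnn
    _ = prob n x' i.1 v * (q n B ⟨i.1, b⟩ x' r * marg n f i (Rset n B ⟨i.1, b⟩ r)) := by ring

lemma inner_D_ge (f : Finset (Elem n) → ℝ) (hmono : MonotoneSet n f) {α : ℝ}
    (hα0 : 0 < α) (hDR : WeaklyDR n f α) (hB : ∀ k, 0 < B k)
    (S : Finset (Elem n)) {x' : Elem n → ℝ} (hx' : InSimplex n x') :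
    α * (f S - ME n B f x') ≤ ∑ i : Elem n, indVec n B S i * D n B f i x' := by
  classical
  set φ : Elem n → ℕ := fun i => ((Fintype.equivFin (Elem n)) i : ℕ) with hφdef
  have hφ : Function.Injective φ :=
    Fin.val_injective.comp (Equiv.injective _)
  have h1 : ∑ i : Elem n, indVec n B S i * D n B f i x'
      = ∑ i ∈ S, (B i.1 : ℝ)⁻¹ * D n B f i x' := by
    rw [← Finset.sum_subset (Finset.subset_univ S)
      (fun i _ hi => by simp [indVec, hi])]
    exact Finset.sum_congr rfl fun i hi => by simp [indVec, hi]
  rw [h1]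
  have h2 : ∀ i ∈ S, α * ∑ e : Choice n B, jointProb n B x' e *
        marg n f i (chosen n B e univ ∪ S.filter fun j => φ j < φ i)
      ≤ (B i.1 : ℝ)⁻¹ * D n B f i x' := by
    intro i _
    have hBi : (0:ℝ) < (B i.1 : ℝ) := by exact_mod_cast hB i.1
    rw [D_glue]
    have hb : ∀ b : Fin (B i.1), α * ∑ e : Choice n B, jointProb n B x' e *
        marg n f i (chosen n B e univ ∪ S.filter fun j => φ j < φ i)
        ≤ ∑ r : Rest n B ⟨i.1, b⟩, q n B ⟨i.1, b⟩ x' r *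
          (f (insert i (Rset n B ⟨i.1, b⟩ r)) - f (Rset n B ⟨i.1, b⟩ r)) :=
      fun b => slot_bound n B f hmono hDR hx' i b _
    have hsum : (B i.1 : ℝ) * (α * ∑ e : Choice n B, jointProb n B x' e *
        marg n f i (chosen n B e univ ∪ S.filter fun j => φ j < φ i))
        ≤ ∑ b : Fin (B i.1), ∑ r : Rest n B ⟨i.1, b⟩, q n B ⟨i.1, b⟩ x' r *
          (f (insert i (Rset n B ⟨i.1, b⟩ r)) - f (Rset n B ⟨i.1, b⟩ r)) := by
      calc (B i.1 : ℝ) * (α * ∑ e : Choice n B, jointProb n B x' e *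
          marg n f i (chosen n B e univ ∪ S.filter fun j => φ j < φ i))
          = ∑ _b : Fin (B i.1), α * ∑ e : Choice n B, jointProb n B x' e *
            marg n f i (chosen n B e univ ∪ S.filter fun j => φ j < φ i) := by
            rw [Finset.sum_const, Finset.card_univ, Fintype.card_fin, nsmul_eq_mul]
        _ ≤ _ := Finset.sum_le_sum fun b _ => hb b
    calc α * ∑ e : Choice n B, jointProb n B x' e *
          marg n f i (chosen n B e univ ∪ S.filter fun j => φ j < φ i)
        = (B i.1 : ℝ)⁻¹ * ((B i.1 : ℝ) * (α * ∑ e : Choice n B, jointProb n B x' e *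
          marg n f i (chosen n B e univ ∪ S.filter fun j => φ j < φ i))) := by
          field_simp
      _ ≤ (B i.1 : ℝ)⁻¹ * _ := mul_le_mul_of_nonneg_left hsum (by positivity)
  have h3 : α * (f S - ME n B f x')
      ≤ ∑ i ∈ S, α * ∑ e : Choice n B, jointProb n B x' e *
        marg n f i (chosen n B e univ ∪ S.filter fun j => φ j < φ i) := by
    have hswap : ∑ i ∈ S, ∑ e : Choice n B, jointProb n B x' e *
        marg n f i (chosen n B e univ ∪ S.filter fun j => φ j < φ i)
        = ∑ e : Choice n B, jointProb n B x' e *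
            (f (chosen n B e univ ∪ S) - f (chosen n B e univ)) := by
      rw [Finset.sum_comm]
      refine Finset.sum_congr rfl fun e _ => ?_
      rw [← Finset.mul_sum, tele n f φ hφ S (chosen n B e univ)]
    rw [← Finset.mul_sum, hswap]
    apply mul_le_mul_of_nonneg_left _ (le_of_lt hα0)
    have hfin : ∑ e : Choice n B, jointProb n B x' e *
        (f S - f (chosen n B e univ)) = f S - ME n B f x' := by
      have : ∀ e : Choice n B, jointProb n B x' e * (f S - f (chosen n B e univ))
          = jointProb n B x' e * f S - f (chosen n B e univ) * jointProb n B x' e := by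
        intro e; ring
      simp only [this]
      rw [Finset.sum_sub_distrib, ← Finset.sum_mul, sum_jointProb, one_mul, ME]
    rw [← hfin]
    refine Finset.sum_le_sum fun e _ => ?_
    apply mul_le_mul_of_nonneg_left _ (jointProb_nonneg n B hx' e)
    have := hmono S (chosen n B e univ ∪ S) Finset.subset_union_right
    linarith
  exact le_trans h3 (Finset.sum_le_sum h2)

end Aux6
section Aux7
variable {K : ℕ} (n B : Fin K → ℕ)

lemma continuous_ME_scale (f : Finset (Elem n) → ℝ) (x : Elem n → ℝ) :
    Continuous fun z : ℝ => ME n B f (fun j => z * x j) := by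
  unfold ME jointProb
  refine continuous_finset_sum _ fun e _ => Continuous.mul continuous_const
    (continuous_finset_prod _ fun s _ => continuous_prob_scale n x s.1 (e s))

end Aux7
theorem multinoulliExtension_auxStationary_dr {K : ℕ} (n B : Fin K → ℕ) (hn : ∀ k, 1 ≤ n k)
    (hB : ∀ k, 0 < B k) (hBn : ∀ k, B k ≤ n k)
    (f : Finset (Elem n) → ℝ) (hf0 : ∀ S, 0 ≤ f S)
    (hmono : MonotoneSet n f)
    (α : ℝ) (hα0 : 0 < α) (hα1 : α ≤ 1) (hDR : WeaklyDR n f α)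
    (hfempty : f ∅ = 0)
    (x : Elem n → ℝ) (hx : InSimplex n x)
    (hstat : ∀ y : Elem n → ℝ, InSimplex n y →
      inner' n (fun i => y i - x i)
        (auxGrad n B f (fun z => Real.exp (α * (z - 1))) x) ≤ 0)
    (S : Finset (Elem n)) (hS : Feasible n B S) :
    (1 - Real.exp (-α)) * f S ≤ ME n B f x := by
  classical
  set w : ℝ → ℝ := fun z => Real.exp (α * (z - 1)) with hw
  set y : Elem n → ℝ := indVec n B S with hy
  have hyS : InSimplex n y := indVec_inSimplex n B S hS hB
  set g : ℝ → ℝ := fun z => ME n B f (fun j => z * x j) with hg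
  set Gd : ℝ → ℝ := fun z => Dc n B f x (fun j => z * x j) with hGd
  have hwcont : Continuous w := by
    rw [hw]; fun_prop
  have hwpos : ∀ z, 0 < w z := fun z => Real.exp_pos _
  have hgcont : Continuous g := continuous_ME_scale n B f x
  have hGdcont : Continuous Gd := continuous_Dc n B f x
  have hDcont : ∀ i : Elem n, Continuous fun z : ℝ => D n B f i (fun j => z * x j) :=
    continuous_D n B f x
  have hwderiv : ∀ z : ℝ, HasDerivAt w (α * w z) z := by
    intro z
    have h1 : HasDerivAt (fun z : ℝ => α * (z - 1)) α z := by
      simpa using (((hasDerivAt_id z).sub_const 1).const_mul α)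
    have h2 := h1.exp
    simpa [hw, mul_comm] using h2
  have hgderiv : ∀ z : ℝ, HasDerivAt g (Gd z) z := fun z => hasDerivAt_ME_scale n B f x z
  have hstat' := hstat y hyS
  rw [inner'] at hstat'
  have haux : ∀ i : Elem n, auxGrad n B f w x i
      = ∫ z in (0:ℝ)..1, w z * D n B f i (fun j => z * x j) := by
    intro i
    rw [auxGrad]
    congr 1
    funext z
    rw [grad, pderiv_ME]
  have hint : ∀ i : Elem n, IntervalIntegrable
      (fun z => w z * D n B f i (fun j => z * x j)) MeasureTheory.volume 0 1 :=
    fun i => (hwcont.mul (hDcont i)).intervalIntegrable 0 1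
  have hswap : ∑ i : Elem n, (y i - x i) * auxGrad n B f w x i
      = ∫ z in (0:ℝ)..1, ∑ i : Elem n, (y i - x i) *
          (w z * D n B f i (fun j => z * x j)) := by
    rw [intervalIntegral.integral_finset_sum
      (fun i _ => (hint i).const_mul (y i - x i))]
    refine Finset.sum_congr rfl fun i _ => ?_
    rw [haux i, ← intervalIntegral.integral_const_mul]
  have hpoint : ∀ z : ℝ, ∑ i : Elem n, (y i - x i) *
        (w z * D n B f i (fun j => z * x j))
      = w z * (∑ i : Elem n, y i * D n B f i (fun j => z * x j)) - w z * Gd z := by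
    intro z
    have hGdz : Gd z = ∑ i : Elem n, x i * D n B f i (fun j => z * x j) := by
      rw [hGd]; exact Dc_eq_sum n B f x _
    rw [hGdz, Finset.mul_sum, Finset.mul_sum, ← Finset.sum_sub_distrib]
    exact Finset.sum_congr rfl fun i _ => by ring
  have hlow : ∀ z ∈ Set.Icc (0:ℝ) 1,
      w z * (α * (f S - g z)) - w z * Gd z
        ≤ ∑ i : Elem n, (y i - x i) * (w z * D n B f i (fun j => z * x j)) := by
    intro z hz
    rw [hpoint z]
    have hsimp : InSimplex n (fun j => z * x j) := scaled_inSimplex n hx hz.1 hz.2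
    have h2 : α * (f S - g z) ≤ ∑ i : Elem n, y i * D n B f i (fun j => z * x j) :=
      inner_D_ge n B f hmono hα0 hDR hB S hsimp
    have h3 := mul_le_mul_of_nonneg_left h2 (le_of_lt (hwpos z))
    linarith
  have hLHScont : Continuous fun z => w z * (α * (f S - g z)) - w z * Gd z :=
    Continuous.sub (hwcont.mul (continuous_const.mul (continuous_const.sub hgcont)))
      (hwcont.mul hGdcont)
  have hRHScont : Continuous fun z => ∑ i : Elem n, (y i - x i) *
      (w z * D n B f i (fun j => z * x j)) :=
    continuous_finset_sum _ fun i _ => continuous_const.mul (hwcont.mul (hDcont i))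
  have hmono_int := intervalIntegral.integral_mono_on (μ := MeasureTheory.volume)
    (by norm_num : (0:ℝ) ≤ 1)
    (hLHScont.intervalIntegrable 0 1) (hRHScont.intervalIntegrable 0 1) hlow
  -- compute the left integral
  have hsplit : (∫ z in (0:ℝ)..1, (w z * (α * (f S - g z)) - w z * Gd z))
      = (∫ z in (0:ℝ)..1, w z * (α * (f S - g z))) - ∫ z in (0:ℝ)..1, w z * Gd z :=
    intervalIntegral.integral_sub
      ((hwcont.mul (continuous_const.mul (continuous_const.sub hgcont))).intervalIntegrable 0 1)
      ((hwcont.mul hGdcont).intervalIntegrable 0 1)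
  have hibp : (∫ z in (0:ℝ)..1, w z * Gd z)
      = w 1 * g 1 - w 0 * g 0 - ∫ z in (0:ℝ)..1, (α * w z) * g z :=
    intervalIntegral.integral_mul_deriv_eq_deriv_mul
      (fun z _ => hwderiv z) (fun z _ => hgderiv z)
      ((continuous_const.mul hwcont).intervalIntegrable 0 1)
      (hGdcont.intervalIntegrable 0 1)
  have hw1 : w 1 = 1 := by rw [hw]; norm_num
  have hg1 : g 1 = ME n B f x := by
    have h1 : (fun j : Elem n => (1:ℝ) * x j) = x := funext fun j => one_mul (x j)
    rw [hg]
    exact congrArg (ME n B f) h1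
  have hg0 : g 0 = 0 := by
    have hzero : (fun j : Elem n => (0:ℝ) * x j) = fun _ => (0:ℝ) := by
      funext j; exact zero_mul (x j)
    calc g 0 = ME n B f (fun _ => (0:ℝ)) := by rw [hg]; exact congrArg (ME n B f) hzero
      _ = 0 := ME_zero n B f hfempty
  have hwg_int : IntervalIntegrable (fun z => w z * g z) MeasureTheory.volume 0 1 :=
    (hwcont.mul hgcont).intervalIntegrable 0 1
  have hαwg : (∫ z in (0:ℝ)..1, (α * w z) * g z) = α * ∫ z in (0:ℝ)..1, w z * g z := by
    have : ∀ z : ℝ, (α * w z) * g z = α * (w z * g z) := fun z => by ring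
    simp only [this]
    exact intervalIntegral.integral_const_mul α _
  have hw_int : (∫ z in (0:ℝ)..1, w z) = α⁻¹ * (1 - Real.exp (-α)) := by
    have hF : ∀ z ∈ Set.uIcc (0:ℝ) 1, HasDerivAt (fun z => α⁻¹ * w z) (w z) z := by
      intro z _
      have h1 := (hwderiv z).const_mul α⁻¹
      have h2 : α⁻¹ * (α * w z) = w z := by
        field_simp
      rwa [h2] at h1
    rw [intervalIntegral.integral_eq_sub_of_hasDerivAt hF (hwcont.intervalIntegrable 0 1)]
    rw [hw]
    norm_num
    ring
  have hfirst : (∫ z in (0:ℝ)..1, w z * (α * (f S - g z)))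
      = α * f S * (α⁻¹ * (1 - Real.exp (-α))) - α * ∫ z in (0:ℝ)..1, w z * g z := by
    have h1 : ∀ z : ℝ, w z * (α * (f S - g z)) = (α * f S) * w z - α * (w z * g z) :=
      fun z => by ring
    simp only [h1]
    rw [intervalIntegral.integral_sub
      ((hwcont.intervalIntegrable 0 1).const_mul (α * f S)) (hwg_int.const_mul α)]
    rw [intervalIntegral.integral_const_mul, intervalIntegral.integral_const_mul, hw_int]
  have hcancel : α * f S * (α⁻¹ * (1 - Real.exp (-α))) = (1 - Real.exp (-α)) * f S := by
    field_simp
  rw [hswap] at hstat'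
  rw [hsplit, hibp, hw1, hg1, hg0, hαwg, hfirst, hcancel] at hmono_int
  linarith
end Multinoulli
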